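/- Let β ≥ 0, α ≥ 0, ρ ≥ 0, and let σ : ℝ → ℝ satisfy |σ(x) − σ(y)| ≤ ρ|x − y| for all x, y. Let A, A' be n×n real matrices, X, X' n×d real matrices, and W a d×d real matrix such that ‖A'‖ ≤ β, ‖X‖ ≤ β, ‖W‖ ≤ β, and ‖X' − X‖ ≤ α·ε where ε = ‖A' − A‖. Then applying σ entrywise, ‖σ(A'·X'·W) − σ(A·X·W)‖ ≤ ρ·(1 + α)·n·d·β²·ε. -/
import Mathlib


attribute [local instance] Matrix.normedAddCommGroup

lemma matrix_entry_mul_le {a b c : ℕ} (M : Matrix (Fin a) (Fin b) ℝ)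
    (N : Matrix (Fin b) (Fin c) ℝ) (i : Fin a) (j : Fin c) :
    |(M * N) i j| ≤ b * ‖M‖ * ‖N‖ := by
  have : (M * N) i j = ∑ k, M i k * N k j := rfl
  rw [this]
  calc |∑ k, M i k * N k j| ≤ ∑ k : Fin b, |M i k * N k j| :=
        Finset.abs_sum_le_sum_abs _ _
    _ ≤ ∑ _k : Fin b, ‖M‖ * ‖N‖ := by
        refine Finset.sum_le_sum fun k _ => ?_
        rw [abs_mul]
        have h1 : |M i k| ≤ ‖M‖ := Matrix.norm_entry_le_entrywise_sup_norm M
        have h2 : |N k j| ≤ ‖N‖ := Matrix.norm_entry_le_entrywise_sup_norm N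
        exact mul_le_mul h1 h2 (abs_nonneg _) ((abs_nonneg _).trans h1)
    _ = b * ‖M‖ * ‖N‖ := by simp [mul_assoc]

lemma matrix_norm_mul_le {a b c : ℕ} (M : Matrix (Fin a) (Fin b) ℝ)
    (N : Matrix (Fin b) (Fin c) ℝ) :
    ‖M * N‖ ≤ b * ‖M‖ * ‖N‖ := by
  refine (Matrix.norm_le_iff ?_).2 fun i j => matrix_entry_mul_le M N i j
  positivity

/-- Error bound for the outputs of a single-layer GCN with a ρ-Lipschitz
activation `σ` and approximate inputs `A'`, `X'`: if `‖A'‖ ≤ β`, `‖X‖ ≤ β`,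
`‖W‖ ≤ β` and `‖X' - X‖ ≤ α * ε` where `ε = ‖A' - A‖`, then
`‖σ(A' * X' * W) - σ(A * X * W)‖ ≤ ρ * (1 + α) * n * d * β ^ 2 * ε`. -/
theorem gcn_output_error_bound {n d : ℕ} {β α ρ : ℝ} (hβ : 0 ≤ β) (hα : 0 ≤ α)
    (hρ : 0 ≤ ρ) (σ : ℝ → ℝ) (hσ : ∀ x y : ℝ, |σ x - σ y| ≤ ρ * |x - y|)
    (A A' : Matrix (Fin n) (Fin n) ℝ) (X X' : Matrix (Fin n) (Fin d) ℝ)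
    (W : Matrix (Fin d) (Fin d) ℝ)
    (hA' : ‖A'‖ ≤ β) (hX : ‖X‖ ≤ β) (hW : ‖W‖ ≤ β)
    (hXX : ‖X' - X‖ ≤ α * ‖A' - A‖) :
    ‖(A' * X' * W).map σ - (A * X * W).map σ‖ ≤
      ρ * (1 + α) * n * d * β ^ 2 * ‖A' - A‖ := by
  set ε := ‖A' - A‖ with hε
  have hε0 : 0 ≤ ε := norm_nonneg _
  -- step 1 : Lipschitz on norms
  have step1 : ‖(A' * X' * W).map σ - (A * X * W).map σ‖ ≤
      ρ * ‖A' * X' * W - A * X * W‖ := by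
    refine (Matrix.norm_le_iff (by positivity)).2 fun i j => ?_
    have : ((A' * X' * W).map σ - (A * X * W).map σ) i j
        = σ ((A' * X' * W) i j) - σ ((A * X * W) i j) := rfl
    rw [Real.norm_eq_abs, this]
    calc |σ ((A' * X' * W) i j) - σ ((A * X * W) i j)|
        ≤ ρ * |(A' * X' * W) i j - (A * X * W) i j| := hσ _ _
      _ ≤ ρ * ‖A' * X' * W - A * X * W‖ := by
          refine mul_le_mul_of_nonneg_left ?_ hρ
          exact Matrix.norm_entry_le_entrywise_sup_norm (A' * X' * W - A * X * W)
  -- decomposition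
  have hdecomp : A' * X' * W - A * X * W = A' * (X' - X) * W + (A' - A) * X * W := by
    rw [Matrix.mul_sub, Matrix.sub_mul, Matrix.sub_mul, Matrix.sub_mul]
    abel
  have h1 : ‖A' * (X' - X) * W‖ ≤ d * (n * β * (α * ε)) * β := by
    calc ‖A' * (X' - X) * W‖ ≤ d * ‖A' * (X' - X)‖ * ‖W‖ := matrix_norm_mul_le _ _
      _ ≤ d * (n * β * (α * ε)) * β := by
        have h := matrix_norm_mul_le A' (X' - X)
        have hAX : ‖A' * (X' - X)‖ ≤ n * β * (α * ε) := by
          refine h.trans ?_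
          gcongr
        gcongr
  have h2 : ‖(A' - A) * X * W‖ ≤ d * (n * ε * β) * β := by
    calc ‖(A' - A) * X * W‖ ≤ d * ‖(A' - A) * X‖ * ‖W‖ := matrix_norm_mul_le _ _
      _ ≤ d * (n * ε * β) * β := by
        have h := matrix_norm_mul_le (A' - A) X
        rw [← hε] at h
        have hAX : ‖(A' - A) * X‖ ≤ n * ε * β := by
          refine h.trans ?_
          gcongr
        gcongr
  have step2 : ‖A' * X' * W - A * X * W‖ ≤ (1 + α) * n * d * β ^ 2 * ε := by
    calc ‖A' * X' * W - A * X * W‖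
        = ‖A' * (X' - X) * W + (A' - A) * X * W‖ := by rw [hdecomp]
      _ ≤ ‖A' * (X' - X) * W‖ + ‖(A' - A) * X * W‖ := norm_add_le _ _
      _ ≤ d * (n * β * (α * ε)) * β + d * (n * ε * β) * β := add_le_add h1 h2
      _ = (1 + α) * n * d * β ^ 2 * ε := by ring
  calc ‖(A' * X' * W).map σ - (A * X * W).map σ‖
      ≤ ρ * ‖A' * X' * W - A * X * W‖ := step1
    _ ≤ ρ * ((1 + α) * n * d * β ^ 2 * ε) := mul_le_mul_of_nonneg_left step2 hρ
    _ = ρ * (1 + α) * n * d * β ^ 2 * ε := by ring
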